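/- With U as in the previous counterexample and A the symmetric matrix with entries a₁₁ = a₁₂ = 0, a₂₂ = 1, one has Z[A, U∘P] = ∫_{ℝ²} exp(-½x₂² - |x₁|⁴) dx < ∞, where P = diag(1,0), but for every j ≥ 1, Z[A, U∘T_j] = ∫_{ℝ²} exp(-½x₂² - U(x₁, j^{-1}x₂)) dx = +∞, where T_j = diag(1, j^{-1}). -/

import Mathlib

open MeasureTheory
open scoped ENNReal

noncomputable def quadForm2 (A : Matrix (Fin 2) (Fin 2) ℝ) (x : Fin 2 → ℝ) : ℝ :=
  ∑ i, ∑ j, A i j * x i * x j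

noncomputable def Ucex (x : Fin 2 → ℝ) : ℝ :=
  if |x 0| * |x 1| ≤ 1 then |x 0| ^ 4 else (|x 1| ^ 4)⁻¹

noncomputable def Zcex (A : Matrix (Fin 2) (Fin 2) ℝ) (U : (Fin 2 → ℝ) → ℝ) : ℝ≥0∞ :=
  ∫⁻ x : Fin 2 → ℝ, ENNReal.ofReal (Real.exp (-(1 / 2) * quadForm2 A x - U x))

lemma quadForm2_diag01 (x : Fin 2 → ℝ) :
    quadForm2 (Matrix.diagonal ![0, 1]) x = x 1 * x 1 := by
  simp [quadForm2, Fin.sum_univ_two, Matrix.diagonal_apply]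

lemma integrable_exp_neg_abs_pow_four :
    Integrable (fun y : ℝ => Real.exp (-|y| ^ 4)) := by
  have hg : Integrable (fun y : ℝ => Real.exp 1 * Real.exp (-1 * y ^ 2)) :=
    (integrable_exp_neg_mul_sq one_pos).const_mul _
  refine hg.mono' ?_ (Filter.Eventually.of_forall fun y => ?_)
  · exact (Real.continuous_exp.comp (by fun_prop)).aestronglyMeasurable
  · rw [Real.norm_eq_abs, abs_of_pos (Real.exp_pos _), ← Real.exp_add]
    apply Real.exp_le_exp.mpr
    have h4 : |y| ^ 4 = y ^ 4 := by
      rw [← abs_pow, abs_of_nonneg (by positivity)]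
    nlinarith [sq_nonneg (y ^ 2 - 1)]

/-- with `A = diag(0,1)`, `P = diag(1,0)`, `T_j = diag(1, j⁻¹)`, the
partition function of `U∘P` is finite but that of `U∘T_j` is infinite for every `j ≥ 1`,
so pointwise convergence of `Z[·, U∘T_j]` to `Z[·, U∘P]` fails. -/
theorem cex_no_pointwise_convergence :
    letI A : Matrix (Fin 2) (Fin 2) ℝ := Matrix.diagonal ![0, 1]
    letI P : Matrix (Fin 2) (Fin 2) ℝ := Matrix.diagonal ![1, 0]
    letI T : ℕ → Matrix (Fin 2) (Fin 2) ℝ := fun j => Matrix.diagonal ![1, (j : ℝ)⁻¹]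
    Zcex A (fun x => Ucex (P.mulVec x)) ≠ ⊤ ∧
    ∀ j : ℕ, 1 ≤ j → Zcex A (fun x => Ucex ((T j).mulVec x)) = ⊤ := by
  constructor
  · -- finiteness for U ∘ P
    have hU : ∀ x : Fin 2 → ℝ,
        Ucex ((Matrix.diagonal ![1, 0]).mulVec x) = |x 0| ^ 4 := by
      intro x
      simp [Ucex, Matrix.mulVec_diagonal]
    have hrw : Zcex (Matrix.diagonal ![0, 1])
        (fun x => Ucex ((Matrix.diagonal ![1, 0]).mulVec x)) =
        ∫⁻ p : ℝ × ℝ, ENNReal.ofReal (Real.exp (-|p.1| ^ 4)) *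
          ENNReal.ofReal (Real.exp (-(1 / 2) * (p.2 * p.2))) := by
      rw [Zcex]
      rw [← ((volume_preserving_finTwoArrow ℝ).symm _).lintegral_comp_emb
        (MeasurableEquiv.finTwoArrow (α := ℝ)).symm.measurableEmbedding]
      congr 1
      ext p
      rw [hU, quadForm2_diag01]
      rw [← ENNReal.ofReal_mul (Real.exp_pos _).le, ← Real.exp_add]
      simp [MeasurableEquiv.finTwoArrow_symm_apply]
      ring_nf
    rw [hrw]
    have m1 : Measurable fun y : ℝ => ENNReal.ofReal (Real.exp (-|y| ^ 4)) := by
      apply Measurable.ennreal_ofReal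
      exact (Real.continuous_exp.comp (by fun_prop : Continuous fun y : ℝ => -|y| ^ 4)).measurable
    have m2 : Measurable fun y : ℝ => ENNReal.ofReal (Real.exp (-(1 / 2) * (y * y))) := by
      apply Measurable.ennreal_ofReal
      exact (Real.continuous_exp.comp
        (by fun_prop : Continuous fun y : ℝ => -(1 / 2) * (y * y))).measurable
    rw [MeasureTheory.Measure.volume_eq_prod, lintegral_prod_mul m1.aemeasurable m2.aemeasurable]
    have h1 : (∫⁻ y : ℝ, ENNReal.ofReal (Real.exp (-|y| ^ 4))) < ⊤ :=
      integrable_exp_neg_abs_pow_four.lintegral_lt_top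
    have h2 : (∫⁻ y : ℝ, ENNReal.ofReal (Real.exp (-(1 / 2) * (y * y)))) < ⊤ := by
      have : Integrable (fun y : ℝ => Real.exp (-(1 / 2) * (y * y))) := by
        have := integrable_exp_neg_mul_sq (b := 1 / 2) (by norm_num)
        simpa [pow_two] using this
      exact this.lintegral_lt_top
    exact (ENNReal.mul_lt_top h1 h2).ne
  · -- divergence for U ∘ T j
    intro j hj
    have hj0 : (0 : ℝ) < j := by exact_mod_cast hj
    have hj1 : (1 : ℝ) ≤ j := by exact_mod_cast hj
    set S : Set (Fin 2 → ℝ) :=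
      Set.univ.pi ![Set.Ioi (2 * (j : ℝ)), Set.Icc 1 2] with hS
    have hSmeas : MeasurableSet S := by
      apply MeasurableSet.univ_pi
      intro i
      fin_cases i
      · exact measurableSet_Ioi
      · exact measurableSet_Icc
    have hSvol : volume S = ⊤ := by
      rw [hS, volume_pi_pi, Fin.prod_univ_two]
      simp [Real.volume_Ioi, Real.volume_Icc]
    set c : ℝ := Real.exp (-(2 + (j : ℝ) ^ 4)) with hc
    have hbound : ∀ x ∈ S, ENNReal.ofReal c ≤
        ENNReal.ofReal (Real.exp (-(1 / 2) * quadForm2 (Matrix.diagonal ![0, 1]) x -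
          Ucex ((Matrix.diagonal ![1, (j : ℝ)⁻¹]).mulVec x))) := by
      intro x hx
      have hx0 : 2 * (j : ℝ) < x 0 := by
        have := hx 0 (Set.mem_univ 0); simpa using this
      have hx1 : x 1 ∈ Set.Icc (1 : ℝ) 2 := by
        have := hx 1 (Set.mem_univ 1); simpa using this
      apply ENNReal.ofReal_le_ofReal
      apply Real.exp_le_exp.mpr
      rw [quadForm2_diag01]
      have hv : (Matrix.diagonal ![1, (j : ℝ)⁻¹]).mulVec x 0 = x 0 ∧
          (Matrix.diagonal ![1, (j : ℝ)⁻¹]).mulVec x 1 = (j : ℝ)⁻¹ * x 1 := by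
        constructor <;> simp [Matrix.mulVec_diagonal]
      have hx0pos : (0:ℝ) < x 0 := lt_trans (by nlinarith) hx0
      have hx1pos : (0:ℝ) < x 1 := lt_of_lt_of_le one_pos hx1.1
      have hjinv : (0:ℝ) < (j : ℝ)⁻¹ := inv_pos.mpr hj0
      have habs : |(Matrix.diagonal ![1, (j : ℝ)⁻¹]).mulVec x 0| *
          |(Matrix.diagonal ![1, (j : ℝ)⁻¹]).mulVec x 1| = x 0 * ((j : ℝ)⁻¹ * x 1) := by
        rw [hv.1, hv.2, abs_of_pos hx0pos, abs_of_pos (by positivity)]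
      have hgt : ¬ (|(Matrix.diagonal ![1, (j : ℝ)⁻¹]).mulVec x 0| *
          |(Matrix.diagonal ![1, (j : ℝ)⁻¹]).mulVec x 1| ≤ 1) := by
        rw [habs]
        push_neg
        have h2 : (2:ℝ) ≤ x 0 * (j : ℝ)⁻¹ := by
          have : 2 * (j:ℝ) * (j:ℝ)⁻¹ ≤ x 0 * (j:ℝ)⁻¹ :=
            mul_le_mul_of_nonneg_right hx0.le hjinv.le
          rwa [mul_inv_cancel_right₀ (ne_of_gt hj0)] at this
        nlinarith [hx1.1]
      rw [Ucex, if_neg hgt, hv.2]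
      have habs2 : |(j : ℝ)⁻¹ * x 1| = (j : ℝ)⁻¹ * x 1 := abs_of_pos (by positivity)
      rw [habs2]
      have hUle : (((j : ℝ)⁻¹ * x 1) ^ 4)⁻¹ ≤ (j : ℝ) ^ 4 := by
        rw [inv_le_comm₀ (by positivity) (by positivity), ← inv_pow]
        exact pow_le_pow_left₀ hjinv.le (le_mul_of_one_le_right hjinv.le hx1.1) 4
      have hx1sq : x 1 * x 1 ≤ 4 := by nlinarith [hx1.1, hx1.2]
      nlinarith
    rw [eq_top_iff]
    calc ⊤ = ∫⁻ x, S.indicator (fun _ => ENNReal.ofReal c) x := by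
          rw [lintegral_indicator hSmeas, setLIntegral_const, hSvol,
            ENNReal.mul_top (by simp [hc, Real.exp_pos])]
      _ ≤ Zcex (Matrix.diagonal ![0, 1])
          (fun x => Ucex ((Matrix.diagonal ![1, (j : ℝ)⁻¹]).mulVec x)) := by
          rw [Zcex]
          apply lintegral_mono
          intro x
          by_cases hxS : x ∈ S
          · rw [Set.indicator_of_mem hxS]
            exact hbound x hxS
          · rw [Set.indicator_of_notMem hxS]
            exact zero_le
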